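/- Let R be a ring with unit and M a finitely presented right R-module. Then the natural map Ψ_M : M ⊗_R R((z^{-1})) → M((z^{-1})), m ⊗ Σ_{i≤k} r_i z^i ↦ Σ_{i≤k} m r_i z^i, is an R((z^{-1}))-linear isomorphism. -/

import Mathlib

noncomputable section
open scoped TensorProduct

namespace Novikov
variable (Γ : Type*) [AddCommGroup Γ] [LinearOrder Γ] [IsOrderedAddMonoid Γ] (R : Type*) [CommRing R]

/-- `R((z))` acting on itself commutes with the `R`-action. -/
instance : SMulCommClass R (HahnSeries Γ R) (HahnSeries Γ R) where
  smul_comm r x y := by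
    rw [← HahnSeries.C_mul_eq_smul, ← HahnSeries.C_mul_eq_smul, smul_eq_mul, smul_eq_mul,
      mul_left_comm]

variable (M : Type*) [AddCommGroup M] [Module R M]

/-- The formal series `Σ_i (r_i • m) z^i`, for `f = Σ_i r_i z^i`. -/
def phiSeries (f : HahnSeries Γ R) (m : M) : HahnSeries Γ M :=
  ⟨fun i => f.coeff i • m, f.isPWO_support.mono (fun i hi h => by
    simp only [Function.mem_support] at hi
    exact hi (by rw [h, zero_smul]))⟩

@[simp] lemma phiSeries_coeff (f : HahnSeries Γ R) (m : M) (i : Γ) :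
    (phiSeries Γ R M f m).coeff i = f.coeff i • m := rfl

/-- The natural map `M ⊗_R R((z)) → M((z))`, `m ⊗ Σ r_i z^i ↦ Σ (m r_i) z^i`
(written with the scalar factor on the left, as is usual for base change). -/
def Phi : HahnSeries Γ R ⊗[R] M →ₗ[R] HahnSeries Γ M :=
  TensorProduct.lift
    { toFun := fun f =>
        { toFun := phiSeries Γ R M f
          map_add' := fun m m' => by
            ext i; simp only [phiSeries_coeff, HahnSeries.coeff_add, smul_add]
          map_smul' := fun r m => by
            ext i; simp only [phiSeries_coeff, RingHom.id_apply, HahnSeries.coeff_smul,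
              smul_comm r] }
      map_add' := fun f g => by
        ext m i
        simp only [LinearMap.coe_mk, AddHom.coe_mk, LinearMap.add_apply, phiSeries_coeff,
          HahnSeries.coeff_add, add_smul]
      map_smul' := fun r f => by
        ext m i
        simp only [LinearMap.coe_mk, AddHom.coe_mk, RingHom.id_apply, LinearMap.smul_apply,
          phiSeries_coeff, HahnSeries.coeff_smul, smul_assoc] }

@[simp] lemma Phi_tmul (f : HahnSeries Γ R) (m : M) :
    Phi Γ R M (f ⊗ₜ[R] m) = phiSeries Γ R M f m := rfl

/-- Key: `phiSeries f m` is the scalar multiplication of `f` on the constant series `m`. -/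
lemma smul_single_eq_phiSeries (f : HahnSeries Γ R) (m : M) :
    f • (HahnModule.of R (HahnSeries.single (0 : Γ) m)) =
      HahnModule.of R (phiSeries Γ R M f m) := by
  classical
  ext a
  rw [HahnModule.coeff_smul_right (Set.isPWO_singleton (0 : Γ))
    (by simpa using HahnSeries.support_single_subset)]
  rw [Finset.sum_eq_single (a, (0 : Γ))]
  · simp
  · rintro ⟨i, j⟩ hmem hne
    rw [Finset.mem_vaddAntidiagonal] at hmem
    obtain ⟨h1, h2, h3⟩ := hmem
    exfalso
    apply hne
    simp only [Set.mem_singleton_iff] at h2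
    subst h2
    simp only [vadd_eq_add, add_zero] at h3
    simp [h3]
  · intro hnot
    have hfa : f.coeff a = 0 := by
      by_contra h
      exact hnot ((Finset.mem_vaddAntidiagonal _ _).mpr ⟨h, rfl, by simp [vadd_eq_add]⟩)
    simp [hfa]

end Novikov

/-- Coefficients of a finite sum of Hahn series. -/
lemma hahnSum_coeff {Γ R ι : Type*} [PartialOrder Γ] [AddCommMonoid R]
    (s : Finset ι) (f : ι → HahnSeries Γ R) (g : Γ) :
    (∑ j ∈ s, f j).coeff g = ∑ j ∈ s, (f j).coeff g :=
  map_sum (HahnSeries.coeff.addMonoidHom g) f s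

/-- A finite union of partially well-ordered sets is partially well-ordered. -/
lemma isPWO_biUnion_finset {α ι : Type*} [Preorder α] (s : Finset ι) (S : ι → Set α)
    (h : ∀ j ∈ s, (S j).IsPWO) : (⋃ j ∈ s, S j).IsPWO := by
  classical
  induction s using Finset.induction_on with
  | empty => simp
  | @insert a s ha ih =>
    rw [Finset.set_biUnion_insert]
    exact (h a (Finset.mem_insert_self a s)).union
      (ih fun j hj => h j (Finset.mem_insert_of_mem hj))

open Novikov in
/-- For a finitely presented right `R`-module `M`, the natural map
`Ψ_M : M ⊗_R R((z⁻¹)) → M((z⁻¹))` is an `R((z⁻¹))`-linear isomorphism.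
Here `R((z⁻¹))`, the ring of formal Laurent series finite to the right, is modelled as
`HahnSeries ℤᵒᵈ R` (Hahn series over the order-dual of `ℤ`). -/
theorem finitePresentation_tensor_negLaurentSeries_iso
    (R : Type*) [CommRing R] (M : Type*) [AddCommGroup M] [Module R M]
    [Module.FinitePresentation R M] :
    ∃ e : (HahnSeries ℤᵒᵈ R ⊗[R] M) ≃ₗ[HahnSeries ℤᵒᵈ R] HahnModule ℤᵒᵈ R M,
      ∀ (f : HahnSeries ℤᵒᵈ R) (m : M),
        (HahnModule.of R).symm (e (f ⊗ₜ[R] m)) = phiSeries ℤᵒᵈ R M f m := by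
  classical
  obtain ⟨n, p, hp⟩ := Module.Finite.exists_fin' R M
  obtain ⟨s, k, hk⟩ := Submodule.fg_iff_exists_fin_generating_family.mp
    (Module.FinitePresentation.fg_ker p hp)
  have key := smul_single_eq_phiSeries ℤᵒᵈ R M
  -- The `R((z⁻¹))`-linear version of `Phi`.
  let Ψ : HahnSeries ℤᵒᵈ R ⊗[R] M →ₗ[HahnSeries ℤᵒᵈ R] HahnModule ℤᵒᵈ R M :=
    { toFun := fun x => HahnModule.of R (Phi ℤᵒᵈ R M x)
      map_add' := fun x y => by simp [map_add]
      map_smul' := fun c x => by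
        simp only [RingHom.id_apply]
        induction x using TensorProduct.induction_on with
        | zero => simp
        | tmul f m =>
          rw [TensorProduct.smul_tmul', smul_eq_mul, Phi_tmul, Phi_tmul, ← key, ← key, mul_smul]
        | add x y hx hy => simp only [smul_add, map_add, HahnModule.of_add, hx, hy] }
  have hΨapp : ∀ x, Ψ x = HahnModule.of R (Phi ℤᵒᵈ R M x) := fun _ => rfl
  -- the canonical basis images
  set E : Fin n → (Fin n → R) := fun j j' => if j = j' then 1 else 0 with hE
  -- Surjectivity
  have hsurj : Function.Surjective Ψ := by
    intro x
    set y := (HahnModule.of R).symm x with hy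
    let σ : M → (Fin n → R) := fun m => if h : m = 0 then 0 else (hp m).choose
    have hσ : ∀ m, p (σ m) = m := by
      intro m
      by_cases h : m = 0
      · simp [σ, h]
      · simp only [σ, dif_neg h]; exact (hp m).choose_spec
    let F : Fin n → HahnSeries ℤᵒᵈ R := fun j =>
      ⟨fun i => σ (y.coeff i) j, y.isPWO_support.mono fun i hi => by
        simp only [Function.mem_support] at hi ⊢
        exact fun h0 => hi (by simp [σ, h0])⟩
    refine ⟨∑ j, F j ⊗ₜ[R] p (E j), ?_⟩
    rw [hΨapp, map_sum, Equiv.apply_eq_iff_eq_symm_apply]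
    ext i
    rw [hahnSum_coeff]
    simp only [Phi_tmul, phiSeries_coeff]
    have : ∀ j, (F j).coeff i = σ (y.coeff i) j := fun _ => rfl
    simp only [this, hE]
    rw [← LinearMap.pi_apply_eq_sum_univ p (σ (y.coeff i)), hσ, ← hy]
  -- Every element can be written with the standard generators.
  have hrepr : ∀ x : HahnSeries ℤᵒᵈ R ⊗[R] M, ∃ f : Fin n → HahnSeries ℤᵒᵈ R,
      x = ∑ j, f j ⊗ₜ[R] p (E j) := by
    intro x
    induction x using TensorProduct.induction_on with
    | zero => exact ⟨0, by simp⟩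
    | tmul h m =>
      obtain ⟨v, rfl⟩ := hp m
      refine ⟨fun j => v j • h, ?_⟩
      rw [LinearMap.pi_apply_eq_sum_univ p v, TensorProduct.tmul_sum]
      exact Finset.sum_congr rfl fun j _ => (TensorProduct.smul_tmul _ _ _).symm
    | add x y hx hy =>
      obtain ⟨fx, hfx⟩ := hx; obtain ⟨fy, hfy⟩ := hy
      exact ⟨fx + fy, by
        simp only [Pi.add_apply, TensorProduct.add_tmul, Finset.sum_add_distrib, hfx, hfy]⟩
  -- Injectivity
  have hinj : Function.Injective Ψ := by
    rw [injective_iff_map_eq_zero]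
    intro x hx0
    obtain ⟨f, rfl⟩ := hrepr x
    have hPhi : Phi ℤᵒᵈ R M (∑ j, f j ⊗ₜ[R] p (E j)) = 0 := by
      have := congrArg (HahnModule.of R).symm hx0
      rw [hΨapp] at this
      simpa using this
    rw [map_sum] at hPhi
    have hv : ∀ i : ℤᵒᵈ, p (fun j => (f j).coeff i) = 0 := by
      intro i
      have h1 : (∑ j, Phi ℤᵒᵈ R M (f j ⊗ₜ[R] p (E j))).coeff i = 0 := by rw [hPhi]; rfl
      rw [hahnSum_coeff] at h1
      simp only [Phi_tmul, phiSeries_coeff] at h1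
      rw [LinearMap.pi_apply_eq_sum_univ p]
      exact h1
    have hmem : ∀ i : ℤᵒᵈ, ∃ c : Fin s → R, ∑ t, c t • k t = (fun j => (f j).coeff i) := by
      intro i
      have hmem' : (fun j => (f j).coeff i) ∈ LinearMap.ker p := LinearMap.mem_ker.mpr (hv i)
      rw [← hk] at hmem'
      exact (Submodule.mem_span_range_iff_exists_fun R).mp hmem'
    let c : ℤᵒᵈ → Fin s → R := fun i =>
      if h : (fun j => (f j).coeff i) = (0 : Fin n → R) then 0 else (hmem i).choose
    have hc : ∀ i, ∑ t, c i t • k t = (fun j => (f j).coeff i) := by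
      intro i
      by_cases h : (fun j => (f j).coeff i) = (0 : Fin n → R)
      · simp only [c, dif_pos h, Pi.zero_apply, zero_smul, Finset.sum_const_zero]
        exact h.symm
      · simp only [c, dif_neg h]; exact (hmem i).choose_spec
    have hcsupp : ∀ i, (fun j => (f j).coeff i) = (0 : Fin n → R) → c i = 0 :=
      fun i h => dif_pos h
    have hU : (⋃ j ∈ (Finset.univ : Finset (Fin n)), HahnSeries.support (f j)).IsPWO :=
      isPWO_biUnion_finset _ _ fun j _ => (f j).isPWO_support
    let g : Fin s → HahnSeries ℤᵒᵈ R := fun t =>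
      ⟨fun i => c i t, hU.mono fun i hi => by
        simp only [Function.mem_support] at hi
        have hvi : (fun j => (f j).coeff i) ≠ (0 : Fin n → R) := by
          intro h
          exact hi (by rw [hcsupp i h]; rfl)
        obtain ⟨j, hj⟩ := Function.ne_iff.mp hvi
        exact Set.mem_biUnion (Finset.mem_univ j) hj⟩
    have hf : ∀ j, f j = ∑ t, k t j • g t := by
      intro j
      ext i
      rw [hahnSum_coeff]
      have h2 := congrFun (hc i) j
      simp only [Finset.sum_apply, Pi.smul_apply, smul_eq_mul] at h2
      rw [← h2]
      exact Finset.sum_congr rfl fun t _ => mul_comm _ _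
    have hpk : ∀ t, p (k t) = 0 := by
      intro t
      have : k t ∈ LinearMap.ker p := hk ▸ Submodule.subset_span (Set.mem_range_self t)
      exact this
    calc ∑ j, f j ⊗ₜ[R] p (E j) = ∑ j, (∑ t, k t j • g t) ⊗ₜ[R] p (E j) := by
          exact Finset.sum_congr rfl fun j _ => by rw [← hf j]
      _ = ∑ j, ∑ t, (k t j • g t) ⊗ₜ[R] p (E j) := by
          simp_rw [TensorProduct.sum_tmul]
      _ = ∑ t, ∑ j, g t ⊗ₜ[R] (k t j • p (E j)) := by
          rw [Finset.sum_comm]; simp_rw [TensorProduct.smul_tmul]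
      _ = ∑ t, g t ⊗ₜ[R] (∑ j, k t j • p (E j)) := by simp_rw [TensorProduct.tmul_sum]
      _ = ∑ t, g t ⊗ₜ[R] p (k t) := by
          refine Finset.sum_congr rfl fun t _ => ?_
          rw [← LinearMap.pi_apply_eq_sum_univ p (k t)]
      _ = 0 := by simp [hpk]
  refine ⟨LinearEquiv.ofBijective Ψ ⟨hinj, hsurj⟩, fun f m => ?_⟩
  show (HahnModule.of R).symm (Ψ (f ⊗ₜ[R] m)) = _
  rw [hΨapp]
  simp
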